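/- Every finite bipartite multigraph admits an equitable k-edge-coloring for every positive integer k; that is, a coloring of the edges with k colors such that at each vertex, the numbers of incident edges of any two colors differ by at most one. -/

import Mathlib

open scoped Classical

namespace EqCol

variable {V E : Type}

/-- incidence -/
def Inc (ends : E → V × V) (v : V) (e : E) : Prop := (ends e).1 = v ∨ (ends e).2 = v

/-- e is an edge between u and v -/
def Link (ends : E → V × V) (e : E) (u v : V) : Prop := ends e = (u, v) ∨ ends e = (v, u)

lemma Link.symm {ends : E → V × V} {e u v} (h : Link ends e u v) : Link ends e v u :=
  h.elim .inr .inl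

lemma Link.inc_left {ends : E → V × V} {e u v} (h : Link ends e u v) : Inc ends u e := by
  rcases h with h | h <;> simp [Inc, h]

lemma Link.inc_elim {ends : E → V × V} {e u v x} (h : Link ends e u v)
    (hx : Inc ends x e) : x = u ∨ x = v := by
  rcases h with h | h <;> rcases hx with hx | hx <;> simp [h] at hx <;> tauto

/-- walks: list of vertices, list of edges -/
inductive Wk (ends : E → V × V) : List V → List E → Prop
  | single (v : V) : Wk ends [v] []
  | cons {e u v vs es} : Link ends e u v → Wk ends (v :: vs) es → Wk ends (u :: v :: vs) (e :: es)

variable {ends : E → V × V}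

lemma Wk.length_eq {L es} (h : Wk ends L es) : L.length = es.length + 1 := by
  induction h with
  | single v => simp
  | cons _ _ ih => simpa using ih

lemma Wk.inc_mem {L es} (h : Wk ends L es) : ∀ e ∈ es, ∀ x, Inc ends x e → x ∈ L := by
  induction h with
  | single v => simp
  | cons hl hw ih =>
    intro e' he' x hx
    rcases List.mem_cons.1 he' with rfl | he'
    · rcases hl.inc_elim hx with rfl | rfl <;> simp
    · exact List.mem_cons_of_mem _ (ih e' he' x hx)

lemma Wk.edges_nodup {L es} (h : Wk ends L es) (hnd : L.Nodup) : es.Nodup := by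
  induction h with
  | single v => simp
  | cons hl hw ih =>
    rename_i e u v vs es' 
    rw [List.nodup_cons] at hnd ⊢
    refine ⟨fun he => hnd.1 ?_, ih hnd.2⟩
    exact hw.inc_mem e he u hl.inc_left

lemma Wk.append {L es} (h : Wk ends L es) {w e} (hne : L ≠ [])
    (hl : Link ends e (L.getLast hne) w) : Wk ends (L ++ [w]) (es ++ [e]) := by
  induction h with
  | single v =>
    simp only [List.getLast_singleton] at hl
    exact .cons hl (.single w)
  | cons hl' hw ih =>
    have := ih (by simp) (by simpa using hl)
    exact .cons hl' this

lemma Wk.reverse {L es} (h : Wk ends L es) : Wk ends L.reverse es.reverse := by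
  induction h with
  | single v => simpa using Wk.single v
  | cons hl hw ih =>
    rename_i e u v vs es'
    have : ((v :: vs).reverse).getLast (by simp) = v := by
      simp [List.getLast_reverse]
    have h2 := ih.append (by simp) (w := u) (e := e) (by rw [this]; exact hl.symm)
    simpa using h2
lemma Wk.side_parity {side : V → Bool} (hbip : ∀ e, side (ends e).1 ≠ side (ends e).2)
    {L es} (h : Wk ends L es) (hne : L ≠ []) :
    side (L.getLast hne) = xor (side (L.head hne)) (decide (es.length % 2 = 1)) := by
  induction h with
  | single v => simp
  | cons hl hw ih =>
    rename_i e u v vs es'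
    have hne2 : (v :: vs) ≠ [] := by simp
    have hsuv : side v = !(side u) := by
      have h1 : side u ≠ side v := by
        rcases hl with h | h
        · simpa [h] using hbip e
        · simpa [h] using (hbip e).symm
      exact Bool.eq_not_iff.2 (Ne.symm h1)
    have hgl : (u :: v :: vs).getLast (by simp) = (v :: vs).getLast hne2 := by
      simp [List.getLast_cons]
    rw [hgl, ih hne2]
    simp only [List.head_cons, hsuv, List.length_cons]
    by_cases hp : es'.length % 2 = 1
    · have h2 : ¬((es'.length + 1) % 2 = 1) := by omega
      simp [hp, h2]
    · have h2 : (es'.length + 1) % 2 = 1 := by omega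
      simp [hp, h2]

lemma Wk.split {L es} (h : Wk ends L es) {w} (hw : w ∈ L) :
    ∃ L₁ es₁ L₂ es₂, L = L₁ ++ w :: L₂ ∧ es = es₁ ++ es₂ ∧ Wk ends (w :: L₂) es₂ := by
  induction h with
  | single v =>
    rcases (by simpa using hw : w = v) with rfl
    exact ⟨[], [], [], [], by simp, by simp, .single w⟩
  | cons hl hwk ih =>
    rename_i e u v vs es'
    rcases List.mem_cons.1 hw with rfl | hw'
    · exact ⟨[], [], v :: vs, e :: es', by simp, by simp, .cons hl hwk⟩
    · obtain ⟨L₁, es₁, L₂, es₂, hL, hes, hwk2⟩ := ih hw'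
      exact ⟨u :: L₁, e :: es₁, L₂, es₂, by simp [hL], by simp [hes], hwk2⟩

noncomputable def acount (ends : E → V × V) (col : Bool) (v : V) : Bool → List E → ℕ
  | _, [] => 0
  | b, e :: es => (if b = col ∧ Inc ends v e then 1 else 0) + acount ends col v (!b) es

lemma acount_eq_zero {L es} (hW : Wk ends L es) {x} (hx : x ∉ L) :
    ∀ b col, acount ends col x b es = 0 := by
  induction hW with
  | single v => intro b col; rfl
  | cons hl hw ih =>
    intro b col
    have h1 : ¬ Inc ends x _ := fun h => by
      rcases hl.inc_elim h with rfl | rfl <;> simp at hx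
    simp only [acount, h1, and_false, if_false, zero_add]
    exact ih (fun h => hx (List.mem_cons_of_mem _ h)) (!b) col

lemma acount_head {u vs es} (hW : Wk ends (u :: vs) es) (hnd : (u :: vs).Nodup)
    (hne : es ≠ []) : ∀ b col, acount ends col u b es = if b = col then 1 else 0 := by
  cases hW with
  | single => exact absurd rfl hne
  | cons hl hw =>
    intro b col
    have h1 : Inc ends u _ := hl.inc_left
    have h2 : u ∉ _ := (List.nodup_cons.1 hnd).1
    simp only [acount, h1, and_true, acount_eq_zero hw h2, add_zero]

lemma Wk.ne_nil {L es} (hW : Wk ends L es) : L ≠ [] := by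
  cases hW <;> simp

lemma acount_last {L es} (hW : Wk ends L es) (hnd : L.Nodup)
    (hne : es ≠ []) : ∀ b col,
      acount ends col (L.getLast hW.ne_nil) b es
        = if (if es.length % 2 = 1 then b else !b) = col then 1 else 0 := by
  induction hW with
  | single => exact absurd rfl hne
  | cons hl hw ih =>
    rename_i e u' v vs' es'
    intro b col
    rcases eq_or_ne es' [] with rfl | hne'
    · have hvs : vs' = [] := by
        cases hw with
        | single => rfl
      subst hvs
      have h1 : Inc ends v e := by
        rcases hl with h | h <;> simp [Inc, h]
      simp [acount, h1]
    · have hvs : vs' ≠ [] := by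
        cases hw with
        | single => exact absurd rfl hne'
        | cons _ _ => simp
      have hz : (u' :: v :: vs').getLast (by simp) = (v :: vs').getLast (by simp) := by
        simp [List.getLast_cons]
      set z := (v :: vs').getLast (by simp) with hzdef
      have hzmem : z ∈ v :: vs' := List.getLast_mem _
      have hzu : z ≠ u' := fun h => (List.nodup_cons.1 hnd).1 (h ▸ hzmem)
      have hzv : z ≠ v := by
        intro h
        have : z ∈ vs' := by
          rw [hzdef, List.getLast_cons hvs]; exact List.getLast_mem _
        exact (List.nodup_cons.1 (List.nodup_cons.1 hnd).2).1 (h ▸ this)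
      have h1 : ¬ Inc ends z e := fun h => by
        rcases hl.inc_elim h with h' | h' <;> [exact hzu h'; exact hzv h']
      have hgoal : (u' :: v :: vs').getLast (by simp) = z := hz
      rw [show ((u' :: v :: vs').getLast (Wk.ne_nil (by exact .cons hl hw))) = z from hz]
      simp only [acount, h1, and_false, if_false, zero_add]
      rw [ih (List.nodup_cons.1 hnd).2 hne' (!b) col]
      congr 1
      have hlen : (e :: es').length = es'.length + 1 := rfl
      rw [hlen]
      by_cases hp : es'.length % 2 = 1
      · have : ¬ ((es'.length + 1) % 2 = 1) := by omega
        simp [hp, this]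
      · have : (es'.length + 1) % 2 = 1 := by omega
        simp [hp, this]

lemma acount_mid {L es} (hW : Wk ends L es) (hnd : L.Nodup)
    {x} (hx : x ∈ L) (hxh : x ≠ L.head hW.ne_nil) (hxl : x ≠ L.getLast hW.ne_nil) :
    ∀ b col, acount ends col x b es = 1 := by
  induction hW with
  | single v =>
    simp only [List.mem_singleton] at hx
    exact absurd hx (by simpa using hxh)
  | cons hl hw ih =>
    rename_i e u' v vs' es'
    intro b col
    have hgl : (u' :: v :: vs').getLast (by simp) = (v :: vs').getLast (by simp) := by
      simp [List.getLast_cons]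
    have hxu : x ≠ u' := by simpa using hxh
    rcases List.mem_cons.1 hx with rfl | hx'
    · exact absurd rfl hxu
    rcases List.mem_cons.1 hx' with rfl | hx'' -- x = v or deeper
    · -- x = v : head of inner walk
      have hvs : vs' ≠ [] := by
        intro h; subst h
        exact hxl (by simpa using hgl.symm)
      have hne' : es' ≠ [] := by
        cases hw with
        | single => exact absurd rfl hvs
        | cons _ _ => simp
      have h1 : Inc ends x e := by
        rcases hl with h | h <;> simp [Inc, h]
      rw [acount]
      rw [acount_head hw (List.nodup_cons.1 hnd).2 hne' (!b) col]
      simp only [h1, and_true]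
      cases b <;> cases col <;> simp
    · have hxv : x ≠ v := fun h => (List.nodup_cons.1 (List.nodup_cons.1 hnd).2).1 (h ▸ hx'')
      have h1 : ¬ Inc ends x e := fun h => by
        rcases hl.inc_elim h with h' | h' <;> [exact hxu h'; exact hxv h']
      rw [acount]
      simp only [h1, and_false, if_false, zero_add]
      exact ih (List.nodup_cons.1 hnd).2 hx' (by simpa using hxv)
        (by rw [show (v :: vs').getLast hw.ne_nil = (u' :: v :: vs').getLast (by simp) from hgl.symm]; exact hxl) (!b) col

noncomputable def patch (b : Bool) : List E → (E → Bool) → E → Bool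
  | [], c => c
  | e :: es, c => fun x => if x = e then b else patch (!b) es c x

lemma patch_not_mem {x} : ∀ {es : List E} {b c}, x ∉ es → patch b es c x = c x := by
  intro es
  induction es with
  | nil => intro b c _; rfl
  | cons e tl ih =>
    intro b c hx
    simp only [List.mem_cons, not_or] at hx
    simp only [patch, if_neg hx.1]
    exact ih hx.2

noncomputable def cnt {α : Type} (ends : E → V × V) (s : Finset E) (c : E → α) (i : α) (v : V) : ℕ :=
  (s.filter fun e => c e = i ∧ Inc ends v e).card

lemma cnt_congr {α : Type} {s : Finset E} {c₁ c₂ : E → α} (h : ∀ e ∈ s, c₁ e = c₂ e)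
    (i : α) (v : V) : cnt ends s c₁ i v = cnt ends s c₂ i v := by
  unfold cnt
  congr 1
  exact Finset.filter_congr (fun e he => by rw [h e he])

lemma cnt_erase {α : Type} {s : Finset E} {c : E → α} {e : E} (he : e ∈ s) (i : α) (v : V) :
    cnt ends s c i v = cnt ends (s.erase e) c i v + (if c e = i ∧ Inc ends v e then 1 else 0) := by
  unfold cnt
  conv_lhs => rw [← Finset.insert_erase he]
  rw [Finset.filter_insert]
  split
  · rw [Finset.card_insert_of_notMem (by simp)]
  · simp

lemma cnt_split : ∀ (es : List E) (b : Bool), es.Nodup → ∀ (s : Finset E), es.toFinset ⊆ s →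
    ∀ (c' : E → Bool) (col : Bool) (v : V),
    cnt ends s (patch b es c') col v
      = cnt ends (s \ es.toFinset) c' col v + acount ends col v b es := by
  intro es
  induction es with
  | nil => intro b _ s _ c' col v; simp [patch, acount]
  | cons e tl ih =>
    intro b hnd s hsub c' col v
    have he : e ∈ s := hsub (by simp)
    have hnd' := List.nodup_cons.1 hnd
    rw [cnt_erase he]
    have h1 : patch b (e :: tl) c' e = b := by simp [patch]
    have h2 : cnt ends (s.erase e) (patch b (e :: tl) c') col v
        = cnt ends (s.erase e) (patch (!b) tl c') col v := by
      refine cnt_congr (fun x hx => ?_) _ _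
      have hxe : x ≠ e := Finset.ne_of_mem_erase hx
      simp [patch, if_neg hxe]
    rw [h2, ih (!b) hnd'.2 (s.erase e) (fun x hx => by
      rw [List.mem_toFinset] at hx
      exact Finset.mem_erase.2 ⟨fun h => hnd'.1 (h ▸ hx), hsub (by simp [hx])⟩) c' col v]
    have h3 : s.erase e \ tl.toFinset = s \ (e :: tl).toFinset := by
      ext x
      simp [Finset.mem_erase, Finset.mem_sdiff, and_comm, not_or]
      tauto
    rw [h3, h1]
    rw [show acount ends col v b (e :: tl)
      = (if b = col ∧ Inc ends v e then 1 else 0) + acount ends col v (!b) tl from rfl]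
    by_cases hc : b = col ∧ Inc ends v e <;> simp [hc] <;> omega

lemma cnt_zero_of {α : Type} {s : Finset E} {c : E → α} {v : V}
    (h : ∀ e ∈ s, ¬ Inc ends v e) (i : α) : cnt ends s c i v = 0 := by
  unfold cnt
  rw [Finset.card_eq_zero]
  ext x
  simp only [Finset.mem_filter, Finset.notMem_empty, iff_false, not_and]
  exact fun hx _ => h x hx


lemma cycle_of_extra [Fintype V] {side : V → Bool}
    (hbip : ∀ e, side (ends e).1 ≠ side (ends e).2) {s : Finset E}
    {L es} (hW : Wk ends L es) (hnd : L.Nodup) (hsub : ∀ e ∈ es, e ∈ s)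
    (hmax : ∀ L' es', Wk ends L' es' → L'.Nodup → (∀ e ∈ es', e ∈ s) →
      es'.length ≤ es.length)
    {f} (hf : f ∈ s) (hfes : f ∉ es) (hfz : Inc ends (L.getLast hW.ne_nil) f) :
    ∃ w L₂ es₂, Wk ends (w :: L₂) es₂ ∧ (w :: L₂).Nodup ∧ es₂ ≠ [] ∧
      (∀ e ∈ es₂, e ∈ s) ∧ f ∉ es₂ ∧ es₂.length % 2 = 1 ∧
      Link ends f ((w :: L₂).getLast (by simp)) w := by
  set z := L.getLast hW.ne_nil with hzdef
  -- the other endpoint of f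
  obtain ⟨w, hlink⟩ : ∃ w, Link ends f z w := by
    rcases hfz with h | h
    · exact ⟨(ends f).2, Or.inl (by rw [← h])⟩
    · exact ⟨(ends f).1, Or.inr (by rw [← h])⟩
  have hsz : side z ≠ side w := by
    rcases hlink with h | h
    · have := hbip f; rw [h] at this; exact this
    · have := hbip f; rw [h] at this; exact this.symm
  have hwz : w ≠ z := fun h => hsz (by rw [h])
  by_cases hwL : w ∈ L
  · -- cycle case
    obtain ⟨L₁, es₁, L₂, es₂, hL, hes, hW2⟩ := hW.split hwL
    have hnd2 : (w :: L₂).Nodup := by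
      rw [hL] at hnd
      exact (List.nodup_append.1 hnd).2.1
    have hglast : z = (w :: L₂).getLast (by simp) := by
      rw [hzdef]
      have : L.getLast hW.ne_nil = (L₁ ++ w :: L₂).getLast (by simp) := by
        congr 1
      rw [this, List.getLast_append]
      simp
    have hne2 : es₂ ≠ [] := by
      intro h
      subst h
      cases hW2 with
      | single => exact hwz (by rw [hglast]; rfl)
    have hsub2 : ∀ e ∈ es₂, e ∈ s := fun e he =>
      hsub e (by rw [hes]; exact List.mem_append_right _ he)
    have hfes2 : f ∉ es₂ := fun h => hfes (by rw [hes]; exact List.mem_append_right _ h)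
    have hodd : es₂.length % 2 = 1 := by
      have hpar := hW2.side_parity hbip (by simp)
      rw [List.head_cons, ← hglast] at hpar
      by_cases hp : es₂.length % 2 = 1
      · exact hp
      · exfalso
        rw [show decide (es₂.length % 2 = 1) = false by simpa using hp] at hpar
        simp at hpar
        exact hsz hpar
    exact ⟨w, L₂, es₂, hW2, hnd2, hne2, hsub2, hfes2, hodd, by rw [← hglast]; exact hlink⟩
  · -- extension: contradiction with maximality
    exfalso
    have hWext : Wk ends (L ++ [w]) (es ++ [f]) := hW.append hW.ne_nil hlink
    have hndext : (L ++ [w]).Nodup := by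
      simp [List.nodup_append, hnd, hwL]
      exact fun a ha h => hwL (h ▸ ha)
    have hsubext : ∀ e ∈ es ++ [f], e ∈ s := by
      intro e he
      rcases List.mem_append.1 he with h | h
      · exact hsub e h
      · simp at h; subst h; exact hf
    have := hmax _ _ hWext hndext hsubext
    simp at this

lemma exists_balanced_two [Fintype V] (ends : E → V × V) (side : V → Bool)
    (hbip : ∀ e, side (ends e).1 ≠ side (ends e).2) (s : Finset E) :
    ∃ c : E → Bool, ∀ v : V,
      |(cnt ends s c true v : ℤ) - (cnt ends s c false v : ℤ)| ≤ 1 := by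
  suffices H : ∀ (n : ℕ) (s : Finset E), s.card = n → ∃ c : E → Bool, ∀ v : V,
      |(cnt ends s c true v : ℤ) - (cnt ends s c false v : ℤ)| ≤ 1 from H s.card s rfl
  intro n
  induction n using Nat.strong_induction_on with
  | _ n ih => ?_
  intro s hn
  subst hn
  rcases Finset.eq_empty_or_nonempty s with rfl | ⟨e₀, he₀⟩
  · exact ⟨fun _ => true, fun v => by simp [cnt]⟩
  have hVpos : 0 < Fintype.card V := Fintype.card_pos_iff.2 ⟨(ends e₀).1⟩
  set P : ℕ → Prop := fun m => ∃ L es, Wk ends L es ∧ L.Nodup ∧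
    (∀ e ∈ es, e ∈ s) ∧ es.length = m with hPdef
  have hbound : ∀ m, P m → m ≤ Fintype.card V := by
    rintro m ⟨L, es, hW, hnd, -, rfl⟩
    have h1 := hW.length_eq
    have h2 := List.Nodup.length_le_card hnd
    omega
  have hP1 : P 1 := by
    refine ⟨[(ends e₀).1, (ends e₀).2], [e₀], ?_, ?_, ?_, rfl⟩
    · exact .cons (Or.inl rfl) (.single _)
    · simp only [List.nodup_cons, List.mem_singleton, List.not_mem_nil,
        not_false_iff, List.nodup_nil, and_true]
      exact fun h => hbip e₀ (by rw [h])
    · intro e he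
      rw [List.mem_singleton] at he
      subst he; exact he₀
  have hPN : P (Nat.findGreatest P (Fintype.card V)) :=
    Nat.findGreatest_spec (hbound 1 hP1) hP1
  have hmaxN : ∀ m, P m → m ≤ Nat.findGreatest P (Fintype.card V) :=
    fun m hm => Nat.le_findGreatest (hbound m hm) hm
  obtain ⟨L, es, hW, hnd, hsub, hlenN⟩ := hPN
  have hesne : es ≠ [] := by
    have h1 : 1 ≤ Nat.findGreatest P (Fintype.card V) := hmaxN 1 hP1
    intro h; rw [h] at hlenN; simp at hlenN; omega
  have hmax : ∀ L' es', Wk ends L' es' → List.Nodup L' → (∀ e ∈ es', e ∈ s) →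
      es'.length ≤ es.length := by
    intro L' es' h1 h2 h3
    rw [hlenN]
    exact hmaxN _ ⟨L', es', h1, h2, h3, rfl⟩
  -- shared finisher for the cycle cases
  have finish : ∀ (w : V) (L₂ : List V) (es₂ : List E) (f : E),
      Wk ends (w :: L₂) es₂ → (w :: L₂).Nodup → es₂ ≠ [] → (∀ e ∈ es₂, e ∈ s) →
      f ∈ s → f ∉ es₂ → es₂.length % 2 = 1 →
      Link ends f ((w :: L₂).getLast (by simp)) w →
      ∃ c : E → Bool, ∀ v : V,
        |(cnt ends s c true v : ℤ) - (cnt ends s c false v : ℤ)| ≤ 1 := by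
    intro w L₂ es₂ f hW2 hnd2 hne2 hsub2 hfs hfes hodd hlink
    set z := (w :: L₂).getLast (by simp) with hzdef
    have hsz : side z ≠ side w := by
      rcases hlink with h | h
      · have := hbip f; rw [h] at this; exact this
      · have := hbip f; rw [h] at this; exact this.symm
    have hzw : z ≠ w := fun h => hsz (by rw [h])
    have hndcl : (f :: es₂).Nodup := List.nodup_cons.2 ⟨hfes, hW2.edges_nodup hnd2⟩
    have hsubcl : (f :: es₂).toFinset ⊆ s := by
      intro x hx
      simp only [List.toFinset_cons, Finset.mem_insert, List.mem_toFinset] at hx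
      rcases hx with rfl | hx
      · exact hfs
      · exact hsub2 _ hx
    have hcardlt : (s \ (f :: es₂).toFinset).card < s.card :=
      Finset.card_lt_card (Finset.sdiff_ssubset hsubcl (by simp))
    obtain ⟨c', hc'⟩ := ih _ hcardlt _ rfl
    refine ⟨patch false (f :: es₂) c', fun v => ?_⟩
    have hsplit := cnt_split (ends := ends) (f :: es₂) false hndcl s hsubcl c'
    have hac : ∀ col, acount ends col v false (f :: es₂) =
        if v ∈ w :: L₂ then 1 else 0 := by
      intro col
      have hstep : acount ends col v false (f :: es₂) =
          (if false = col ∧ Inc ends v f then 1 else 0) + acount ends col v true es₂ := by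
        simp [acount]
      by_cases hv : v ∈ w :: L₂
      · rw [if_pos hv]
        rcases List.mem_cons.1 hv with rfl | hv'
        · -- v = w : head of the walk
          have h1 : Inc ends v f := hlink.symm.inc_left
          rw [hstep, acount_head hW2 hnd2 hne2 true col]
          simp only [h1, and_true]
          cases col <;> simp
        · by_cases hvz : v = z
          · subst hvz
            have h1 : Inc ends z f := hlink.inc_left
            rw [hstep, acount_last hW2 hnd2 hne2 true col]
            simp only [h1, and_true, hodd]
            cases col <;> simp
          · have hvw : v ≠ w := fun h => (List.nodup_cons.1 hnd2).1 (h ▸ hv')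
            have h1 : ¬ Inc ends v f := fun h => by
              rcases hlink.inc_elim h with h' | h'
              · exact hvz h'
              · exact hvw h'
            rw [hstep, acount_mid hW2 hnd2 hv (by simpa using hvw) hvz true col]
            simp [h1]
      · rw [if_neg hv]
        have h1 : ¬ Inc ends v f := fun h => by
          rcases hlink.inc_elim h with h' | h'
          · exact hv (h' ▸ List.getLast_mem (l := w :: L₂) (by simp))
          · exact hv (h' ▸ (List.mem_cons_self : w ∈ w :: L₂))
        rw [hstep, acount_eq_zero hW2 hv true col]
        simp [h1]
    rw [hsplit true v, hsplit false v, hac true, hac false]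
    have harr : ∀ (X a b : ℕ), ((a + X : ℕ) : ℤ) - ((b + X : ℕ) : ℤ) = (a : ℤ) - b := by
      intro X a b; push_cast; ring
    rw [harr]
    exact hc' v
  by_cases hz : ∃ f ∈ s, f ∉ es ∧ Inc ends (L.getLast hW.ne_nil) f
  · obtain ⟨f, hfs, hfes, hfz⟩ := hz
    obtain ⟨w, L₂, es₂, h1, h2, h3, h4, h5, h6, h7⟩ :=
      cycle_of_extra hbip hW hnd hsub hmax hfs hfes hfz
    exact finish w L₂ es₂ f h1 h2 h3 h4 hfs h5 h6 h7
  · by_cases hu : ∃ f ∈ s, f ∉ es ∧ Inc ends (L.head hW.ne_nil) f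
    · -- operate on the reversed walk
      obtain ⟨f, hfs, hfes, hfu⟩ := hu
      have hWr : Wk ends L.reverse es.reverse := hW.reverse
      have hndr : L.reverse.Nodup := List.nodup_reverse.2 hnd
      have hsubr : ∀ e ∈ es.reverse, e ∈ s := fun e he =>
        hsub e (List.mem_reverse.1 he)
      have hmaxr : ∀ L' es', Wk ends L' es' → List.Nodup L' → (∀ e ∈ es', e ∈ s) →
          es'.length ≤ es.reverse.length := by
        simpa using hmax
      have hglr : L.reverse.getLast hWr.ne_nil = L.head hW.ne_nil :=
        List.getLast_reverse _
      have hfzr : Inc ends (L.reverse.getLast hWr.ne_nil) f := by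
        rw [hglr]; exact hfu
      have hfesr : f ∉ es.reverse := fun h => hfes (List.mem_reverse.1 h)
      obtain ⟨w, L₂, es₂, h1, h2, h3, h4, h5, h6, h7⟩ :=
        cycle_of_extra hbip hWr hndr hsubr hmaxr hfs hfesr hfzr
      exact finish w L₂ es₂ f h1 h2 h3 h4 hfs h5 h6 h7
    · -- a maximal path whose ends are not extendable: alternate along it
      push_neg at hz hu
      have hndes : es.Nodup := hW.edges_nodup hnd
      have hsubes : es.toFinset ⊆ s := by
        intro x hx; exact hsub x (List.mem_toFinset.1 hx)
      have hcardlt : (s \ es.toFinset).card < s.card :=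
        Finset.card_lt_card (Finset.sdiff_ssubset hsubes (by
          cases es with
          | nil => exact absurd rfl hesne
          | cons a as => exact ⟨a, by simp⟩))
      obtain ⟨c', hc'⟩ := ih _ hcardlt _ rfl
      obtain ⟨u, vs, rfl⟩ : ∃ u vs, L = u :: vs := by
        cases hW with
        | single v => exact ⟨_, _, rfl⟩
        | cons _ _ => exact ⟨_, _, rfl⟩
      refine ⟨patch true es c', fun v => ?_⟩
      have hsplit := cnt_split (ends := ends) es true hndes s hsubes c'
      rw [hsplit true v, hsplit false v]
      by_cases hvu : v = u
      · subst hvu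
        have h0 : ∀ col : Bool, cnt ends (s \ es.toFinset) c' col v = 0 := by
          intro col
          refine cnt_zero_of (fun e he hi => ?_) col
          rw [Finset.mem_sdiff, List.mem_toFinset] at he
          exact hu e he.1 he.2 hi
        rw [acount_head hW hnd hesne true true, acount_head hW hnd hesne true false,
          h0 true, h0 false]
        simp
      · by_cases hvz : v = (u :: vs).getLast hW.ne_nil
        · subst hvz
          have h0 : ∀ col : Bool,
              cnt ends (s \ es.toFinset) c' col ((u :: vs).getLast hW.ne_nil) = 0 := by
            intro col
            refine cnt_zero_of (fun e he hi => ?_) col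
            rw [Finset.mem_sdiff, List.mem_toFinset] at he
            exact hz e he.1 he.2 hi
          rw [acount_last hW hnd hesne true true, acount_last hW hnd hesne true false,
            h0 true, h0 false]
          split <;> simp
        · by_cases hvL : v ∈ u :: vs
          · rw [acount_mid hW hnd hvL hvu hvz true true,
              acount_mid hW hnd hvL hvu hvz true false]
            have harr : ∀ (X a b : ℕ), ((a + X : ℕ) : ℤ) - ((b + X : ℕ) : ℤ) = (a : ℤ) - b := by
              intro X a b; push_cast; ring
            rw [harr]
            exact hc' v
          · rw [acount_eq_zero hW hvL true true, acount_eq_zero hW hvL true false]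
            have harr : ∀ (X a b : ℕ), ((a + X : ℕ) : ℤ) - ((b + X : ℕ) : ℤ) = (a : ℤ) - b := by
              intro X a b; push_cast; ring
            rw [harr]
            exact hc' v

lemma card_filter_congr {β : Type} {s t : Finset β} {p q : β → Prop}
    [DecidablePred p] [DecidablePred q] (hst : s = t) (h : ∀ x ∈ t, p x ↔ q x) :
    (s.filter p).card = (t.filter q).card := by
  subst hst
  congr 1
  exact Finset.filter_congr h

lemma cnt_eq_cnt {α β : Type} {s t : Finset E} {c₁ : E → α} {c₂ : E → β} {i₁ : α} {i₂ : β}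
    (x : V) (h : ∀ e, (e ∈ s ∧ c₁ e = i₁) ↔ (e ∈ t ∧ c₂ e = i₂)) :
    cnt ends s c₁ i₁ x = cnt ends t c₂ i₂ x := by
  unfold EqCol.cnt
  refine congrArg Finset.card (Finset.ext (fun e => ?_))
  rw [Finset.mem_filter, Finset.mem_filter]
  constructor
  · rintro ⟨hes, h1, h2⟩
    obtain ⟨h3, h4⟩ := (h e).1 ⟨hes, h1⟩
    exact ⟨h3, h4, h2⟩
  · rintro ⟨hes, h1, h2⟩
    obtain ⟨h3, h4⟩ := (h e).2 ⟨hes, h1⟩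
    exact ⟨h3, h4, h2⟩

lemma cnt_partition {α : Type} (s : Finset E) (c : E → α) (i j : α) (hij : i ≠ j)
    (hmem : ∀ e ∈ s, c e = i ∨ c e = j) (x : V) :
    cnt ends s c i x + cnt ends s c j x = (s.filter (fun e => Inc ends x e)).card := by
  unfold EqCol.cnt
  have hdis : Disjoint (s.filter (fun e => c e = i ∧ Inc ends x e))
      (s.filter (fun e => c e = j ∧ Inc ends x e)) := by
    rw [Finset.disjoint_left]
    intro e he1 he2
    rw [Finset.mem_filter] at he1 he2
    exact hij (he1.2.1.symm.trans he2.2.1)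
  rw [← Finset.card_union_of_disjoint hdis]
  refine congrArg Finset.card (Finset.ext (fun e => ?_))
  simp only [Finset.mem_union, Finset.mem_filter]
  constructor
  · rintro (⟨he, -, h2⟩ | ⟨he, -, h2⟩) <;> exact ⟨he, h2⟩
  · rintro ⟨he, h2⟩
    rcases hmem e he with h | h
    · exact Or.inl ⟨he, h, h2⟩
    · exact Or.inr ⟨he, h, h2⟩

lemma sq_le_sq_of_balanced {a b x y : ℤ} (hsum : a + b = x + y) (hbal : |a - b| ≤ 1) :
    a ^ 2 + b ^ 2 ≤ x ^ 2 + y ^ 2 := by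
  rw [abs_le] at hbal
  have e1 : 2 * (a ^ 2 + b ^ 2) = (a + b) ^ 2 + (a - b) ^ 2 := by ring
  have e2 : 2 * (x ^ 2 + y ^ 2) = (x + y) ^ 2 + (x - y) ^ 2 := by ring
  rw [hsum] at e1
  have hle : (a - b) ^ 2 ≤ (x - y) ^ 2 := by
    rcases eq_or_ne x y with h | h
    · have h0 : a - b = 0 := by omega
      rw [h0]
      positivity
    · have h2 : (a - b) ^ 2 ≤ 1 := by nlinarith
      have h3 : 1 ≤ (x - y) ^ 2 := by
        have h4 : x - y ≤ -1 ∨ 1 ≤ x - y := by omega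
        rcases h4 with h' | h' <;> nlinarith
      linarith
  linarith

lemma sq_lt_sq_of_balanced {a b x y : ℤ} (hsum : a + b = x + y) (hbal : |a - b| ≤ 1)
    (hgap : 2 ≤ |x - y|) : a ^ 2 + b ^ 2 < x ^ 2 + y ^ 2 := by
  rw [abs_le] at hbal
  rw [le_abs] at hgap
  have h2 : (a - b) ^ 2 ≤ 1 := by nlinarith
  have h3 : 4 ≤ (x - y) ^ 2 := by rcases hgap with h | h <;> nlinarith
  have e1 : 2 * (a ^ 2 + b ^ 2) = (a + b) ^ 2 + (a - b) ^ 2 := by ring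
  have e2 : 2 * (x ^ 2 + y ^ 2) = (x + y) ^ 2 + (x - y) ^ 2 := by ring
  rw [hsum] at e1
  linarith

end EqCol

/-- The number of edges of color `i` incident with `v`. -/
noncomputable def colorDegAt {V E : Type} [Fintype E] {k : ℕ} (ends : E → V × V) (c : E → Fin k)
    (i : Fin k) (v : V) : ℕ :=
  Nat.card {e : E // c e = i ∧ ((ends e).1 = v ∨ (ends e).2 = v)}

open EqCol

/-- Every finite bipartite multigraph admits an equitable `k`-edge-coloring for every
positive integer `k`: at each vertex, the numbers of incident edges of any two colors
differ by at most one. -/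
theorem bipartite_equitable_coloring {V E : Type} [Fintype V] [Fintype E]
    (ends : E → V × V) (side : V → Bool)
    (hbip : ∀ e, side (ends e).1 ≠ side (ends e).2)
    (k : ℕ) (hk : 0 < k) :
    ∃ c : E → Fin k, ∀ (v : V) (i j : Fin k),
      |(colorDegAt ends c i v : ℤ) - (colorDegAt ends c j v : ℤ)| ≤ 1 := by
  classical
  have hcd : ∀ (c : E → Fin k) (l : Fin k) (x : V),
      colorDegAt ends c l x = cnt ends Finset.univ c l x := by
    intro c l x
    rw [colorDegAt, Nat.card_eq_fintype_card, Fintype.card_subtype]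
    unfold EqCol.cnt
    refine congrArg Finset.card ?_
    ext e
    simp only [Finset.mem_filter, Finset.mem_univ, true_and]
    simp [EqCol.Inc]
  haveI : Nonempty (Fin k) := ⟨⟨0, hk⟩⟩
  set Φ : (E → Fin k) → ℕ :=
    fun c => ∑ x : V, ∑ l : Fin k, (cnt ends Finset.univ c l x) ^ 2 with hΦ
  obtain ⟨c, -, hmin⟩ := Finset.exists_min_image Finset.univ Φ
    ⟨fun _ => ⟨0, hk⟩, Finset.mem_univ _⟩
  refine ⟨c, fun v i j => ?_⟩
  rw [hcd c i v, hcd c j v]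
  by_contra hcon
  push_neg at hcon
  have hgap : 2 ≤ |(cnt ends Finset.univ c i v : ℤ) - cnt ends Finset.univ c j v| := by omega
  have hij : i ≠ j := by
    rintro rfl
    simp at hcon
  set s : Finset E := Finset.univ.filter (fun e => c e = i ∨ c e = j) with hs
  obtain ⟨c₂, hc₂⟩ := exists_balanced_two ends side hbip s
  set c' : E → Fin k := fun e => if c e = i ∨ c e = j then (if c₂ e then i else j) else c e
    with hc'def
  have hmem_s : ∀ e, e ∈ s ↔ (c e = i ∨ c e = j) := by
    intro e
    rw [hs, Finset.mem_filter]
    simp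
  have hval : ∀ (e : E) (l : Fin k), l ≠ i → l ≠ j → (c' e = l ↔ c e = l) := by
    intro e l hli hlj
    by_cases hce : c e = i ∨ c e = j
    · have hL : ¬ (c' e = l) := by
        rw [hc'def]
        simp only [if_pos hce]
        cases hb : c₂ e
        · simp only [Bool.false_eq_true, ite_false]
          exact fun h => hlj h.symm
        · simp only [ite_true]
          exact fun h => hli h.symm
      have hR : ¬ (c e = l) := by
        rcases hce with h | h <;> rw [h]
        · exact fun hh => hli hh.symm
        · exact fun hh => hlj hh.symm
      exact iff_of_false hL hR
    · rw [hc'def]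
      simp only [if_neg hce]
  have hva2 : ∀ e, c' e = i ↔ (e ∈ s ∧ c₂ e = true) := by
    intro e
    rw [hmem_s e]
    by_cases hce : c e = i ∨ c e = j
    · cases hb : c₂ e <;>
        simp [hc'def, hce, hb, Ne.symm hij]
    · have h1 : c e ≠ i := fun h => hce (Or.inl h)
      simp only [hc'def]
      rw [if_neg hce]
      exact iff_of_false h1 (fun h => hce h.1)
  have hva3 : ∀ e, c' e = j ↔ (e ∈ s ∧ c₂ e = false) := by
    intro e
    rw [hmem_s e]
    by_cases hce : c e = i ∨ c e = j
    · cases hb : c₂ e <;>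
        simp [hc'def, hce, hb, hij]
    · have h1 : c e ≠ j := fun h => hce (Or.inr h)
      simp only [hc'def]
      rw [if_neg hce]
      exact iff_of_false h1 (fun h => hce h.1)
  have F1 : ∀ (l : Fin k), l ≠ i → l ≠ j → ∀ x,
      cnt ends Finset.univ c' l x = cnt ends Finset.univ c l x := by
    intro l hli hlj x
    refine cnt_eq_cnt x (fun e => ?_)
    simp only [Finset.mem_univ, true_and]
    exact hval e l hli hlj
  have F2 : ∀ x, cnt ends Finset.univ c' i x = cnt ends s c₂ true x := by
    intro x
    refine cnt_eq_cnt x (fun e => ?_)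
    simp only [Finset.mem_univ, true_and]
    exact hva2 e
  have F3 : ∀ x, cnt ends Finset.univ c' j x = cnt ends s c₂ false x := by
    intro x
    refine cnt_eq_cnt x (fun e => ?_)
    simp only [Finset.mem_univ, true_and]
    exact hva3 e
  have hA : ∀ x, cnt ends Finset.univ c i x = cnt ends s c i x := by
    intro x
    refine cnt_eq_cnt x (fun e => ?_)
    simp only [Finset.mem_univ, true_and]
    exact ⟨fun h => ⟨(hmem_s e).2 (Or.inl h), h⟩, fun h => h.2⟩
  have hB : ∀ x, cnt ends Finset.univ c j x = cnt ends s c j x := by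
    intro x
    refine cnt_eq_cnt x (fun e => ?_)
    simp only [Finset.mem_univ, true_and]
    exact ⟨fun h => ⟨(hmem_s e).2 (Or.inr h), h⟩, fun h => h.2⟩
  have F4 : ∀ x, cnt ends s c₂ true x + cnt ends s c₂ false x
      = cnt ends Finset.univ c i x + cnt ends Finset.univ c j x := by
    intro x
    rw [hA x, hB x]
    rw [cnt_partition s c₂ true false (by simp) (fun e _ => by cases c₂ e <;> simp) x,
      cnt_partition s c i j hij (fun e he => (hmem_s e).1 he) x]
  have hsum_eq : ∀ (g : Fin k → ℕ), ∑ l : Fin k, g l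
      = g i + (g j + ∑ l ∈ (Finset.univ.erase i).erase j, g l) := by
    intro g
    rw [← Finset.add_sum_erase _ g (Finset.mem_univ i)]
    congr 1
    rw [← Finset.add_sum_erase _ g (Finset.mem_erase.2 ⟨Ne.symm hij, Finset.mem_univ j⟩)]
  have htail : ∀ x, ∑ l ∈ (Finset.univ.erase i).erase j, (cnt ends Finset.univ c' l x) ^ 2
      = ∑ l ∈ (Finset.univ.erase i).erase j, (cnt ends Finset.univ c l x) ^ 2 := by
    intro x
    refine Finset.sum_congr rfl (fun l hl => ?_)
    have hlj : l ≠ j := (Finset.mem_erase.1 hl).1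
    have hli : l ≠ i := (Finset.mem_erase.1 (Finset.mem_erase.1 hl).2).1
    rw [F1 l hli hlj x]
  have hpair : ∀ x, (cnt ends Finset.univ c' i x : ℤ) ^ 2 + (cnt ends Finset.univ c' j x) ^ 2
      ≤ (cnt ends Finset.univ c i x : ℤ) ^ 2 + (cnt ends Finset.univ c j x) ^ 2 := by
    intro x
    rw [F2 x, F3 x]
    refine sq_le_sq_of_balanced ?_ (hc₂ x)
    exact_mod_cast F4 x
  have hpairv : (cnt ends Finset.univ c' i v : ℤ) ^ 2 + (cnt ends Finset.univ c' j v) ^ 2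
      < (cnt ends Finset.univ c i v : ℤ) ^ 2 + (cnt ends Finset.univ c j v) ^ 2 := by
    rw [F2 v, F3 v]
    refine sq_lt_sq_of_balanced ?_ (hc₂ v) hgap
    exact_mod_cast F4 v
  have hΦlt : Φ c' < Φ c := by
    refine Finset.sum_lt_sum (fun x _ => ?_) ⟨v, Finset.mem_univ v, ?_⟩
    · rw [hsum_eq (fun l => (cnt ends Finset.univ c' l x) ^ 2),
        hsum_eq (fun l => (cnt ends Finset.univ c l x) ^ 2), htail x]
      have hnat : (cnt ends Finset.univ c' i x) ^ 2 + (cnt ends Finset.univ c' j x) ^ 2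
          ≤ (cnt ends Finset.univ c i x) ^ 2 + (cnt ends Finset.univ c j x) ^ 2 := by
        exact_mod_cast hpair x
      omega
    · rw [hsum_eq (fun l => (cnt ends Finset.univ c' l v) ^ 2),
        hsum_eq (fun l => (cnt ends Finset.univ c l v) ^ 2), htail v]
      have hnat : (cnt ends Finset.univ c' i v) ^ 2 + (cnt ends Finset.univ c' j v) ^ 2
          < (cnt ends Finset.univ c i v) ^ 2 + (cnt ends Finset.univ c j v) ^ 2 := by
        exact_mod_cast hpairv
      omega
  exact absurd (hmin c' (Finset.mem_univ c')) (not_le.2 hΦlt)
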